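/- Let H be a real Hilbert space and ξ₁, …, ξ_n i.i.d. H-valued random variables with ‖ξᵢ‖ ≤ M almost surely and E[‖ξ₁‖²] = σ². Then for every δ ∈ (0,1), with probability at least 1 - δ, ‖(1/n)·Σᵢ (ξᵢ - E[ξᵢ])‖ ≤ 2M·log(2/δ)/n + √(2σ²·log(2/δ)/n). -/

import Mathlib

open MeasureTheory ProbabilityTheory Real Nat

set_option linter.unusedSectionVars false
set_option maxHeartbeats 1000000

lemma summable_aux (t : ℝ) (ht : 0 ≤ t) : Summable (fun k : ℕ => t ^ k / ((2*k)! : ℝ)) := by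
  refine Summable.of_nonneg_of_le (fun k => by positivity) (fun k => ?_)
    (Real.summable_pow_div_factorial t)
  gcongr
  omega

lemma coshsqrt_eq (t : ℝ) (ht : 0 ≤ t) :
    Real.cosh (Real.sqrt t) = ∑' k : ℕ, t ^ k / ((2*k)! : ℝ) := by
  rw [Real.cosh_eq_tsum]
  congr 1; ext k
  rw [pow_mul, Real.sq_sqrt ht]

lemma coshsqrt_convexOn : ConvexOn ℝ (Set.Ici 0) (fun t : ℝ => Real.cosh (Real.sqrt t)) := by
  refine ⟨convex_Ici 0, fun a ha b hb p q hp hq hpq => ?_⟩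
  simp only [smul_eq_mul]
  have ha' : (0:ℝ) ≤ a := ha
  have hb' : (0:ℝ) ≤ b := hb
  have hab : 0 ≤ p * a + q * b := by positivity
  rw [coshsqrt_eq _ hab, coshsqrt_eq _ ha', coshsqrt_eq _ hb']
  have h1 : ∀ k : ℕ, (p*a+q*b)^k / ((2*k)! : ℝ) ≤ p * (a^k/((2*k)! : ℝ)) + q * (b^k/((2*k)! : ℝ)) := by
    intro k
    have h2 : (p*a+q*b)^k ≤ p*a^k + q*b^k := by
      have := (convexOn_pow (𝕜 := ℝ) k).2 ha hb hp hq hpq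
      simpa using this
    calc (p*a+q*b)^k / ((2*k)! : ℝ) ≤ (p*a^k + q*b^k) / ((2*k)! : ℝ) := by gcongr
      _ = p * (a^k/((2*k)! : ℝ)) + q * (b^k/((2*k)! : ℝ)) := by ring
  calc ∑' k : ℕ, (p*a+q*b)^k/((2*k)! : ℝ) ≤ ∑' k : ℕ, (p * (a^k/((2*k)! : ℝ)) + q * (b^k/((2*k)! : ℝ))) := by
        refine Summable.tsum_le_tsum h1 (summable_aux _ hab) ?_
        exact ((summable_aux a ha').mul_left p).add ((summable_aux b hb').mul_left q)
    _ = p * ∑' k : ℕ, a^k/((2*k)! : ℝ) + q * ∑' k : ℕ, b^k/((2*k)! : ℝ) := by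
        rw [Summable.tsum_add ((summable_aux a ha').mul_left p) ((summable_aux b hb').mul_left q),
          tsum_mul_left, tsum_mul_left]


lemma exp_eq_tsum' (u : ℝ) : Real.exp u = ∑' n : ℕ, u ^ n / (n ! : ℝ) := by
  rw [Real.exp_eq_exp_ℝ, NormedSpace.exp_eq_tsum_div]

lemma summable_shift2 (u : ℝ) : Summable (fun k : ℕ => u^(k+2)/((k+2)! : ℝ)) := by
  have := Real.summable_pow_div_factorial u
  exact ((summable_nat_add_iff 2).2 this)

lemma exp_taylor2 (u : ℝ) : Real.exp u - 1 - u = ∑' k : ℕ, u^(k+2)/((k+2)! : ℝ) := by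
  have hs := Real.summable_pow_div_factorial u
  have h1 : ∑' n : ℕ, u ^ n / (n ! : ℝ)
      = u^0/(0! : ℝ) + ∑' k : ℕ, u^(k+1)/((k+1)! : ℝ) := Summable.tsum_eq_zero_add hs
  have hs1 : Summable (fun k : ℕ => u^(k+1)/((k+1)! : ℝ)) := (summable_nat_add_iff 1).2 hs
  have h2 : ∑' k : ℕ, u^(k+1)/((k+1)! : ℝ)
      = u^1/(1! : ℝ) + ∑' k : ℕ, u^(k+2)/((k+2)! : ℝ) := by
    have := Summable.tsum_eq_zero_add hs1
    simpa using this
  rw [exp_eq_tsum', h1, h2]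
  simp [Nat.factorial]
lemma exp_ratio_mono {l b c : ℝ} (hl : 0 ≤ l) (hc : 0 ≤ c) (hcb : c ≤ b) :
    Real.exp (l*c) - 1 - l*c ≤ (c^2/b^2) * (Real.exp (l*b) - 1 - l*b) := by
  rcases eq_or_lt_of_le (hc.trans hcb) with hb0 | hb0
  · have hc0 : c = 0 := le_antisymm (hcb.trans hb0.symm.le) hc
    simp [← hb0, hc0]
  rw [exp_taylor2, exp_taylor2, ← tsum_mul_left]
  refine Summable.tsum_le_tsum (fun k => ?_) (summable_shift2 _) ((summable_shift2 _).mul_left _)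
  have h1 : (l*c)^(k+2) ≤ c^2/b^2 * (l*b)^(k+2) := by
    rw [mul_pow, mul_pow, div_mul_eq_mul_div, le_div_iff₀ (by positivity)]
    have : c^(k+2) * b^2 ≤ c^2 * b^(k+2) := by
      calc c^(k+2) * b^2 = (c^k * c^2) * b^2 := by ring
        _ ≤ (b^k * c^2) * b^2 := by
            have h := mul_le_mul_of_nonneg_right (pow_le_pow_left₀ hc hcb k)
              (by positivity : (0:ℝ) ≤ c^2 * b^2)
            nlinarith [h]
        _ = c^2 * b^(k+2) := by ring
    calc l^(k+2)*c^(k+2) * b^2 = (c^(k+2) * b^2) * l^(k+2) := by ring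
      _ ≤ (c^2 * b^(k+2)) * l^(k+2) := by
          exact mul_le_mul_of_nonneg_right this (pow_nonneg hl _)
      _ = c^2 * (l^(k+2) * b^(k+2)) := by ring
  calc (l*c)^(k+2)/((k+2)! : ℝ) ≤ (c^2/b^2 * (l*b)^(k+2))/((k+2)! : ℝ) := by gcongr
    _ = c^2/b^2 * ((l*b)^(k+2)/((k+2)! : ℝ)) := by ring

lemma exp_cubic_bound {u : ℝ} (h0 : 0 ≤ u) (h1 : u ≤ 1) :
    Real.exp u ≤ 1 + u + u^2/2 + (2/9)*u^3 := by
  have := Real.exp_bound (x := u) (by rw [abs_of_nonneg h0]; exact h1) (n := 3) (by norm_num)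
  have hsum : ∑ i ∈ Finset.range 3, u ^ i / (i ! : ℝ) = 1 + u + u^2/2 := by
    simp [Finset.sum_range_succ, Nat.factorial]
  rw [hsum, abs_of_nonneg h0] at this
  have h2 := (abs_le.1 this).2
  have : (3:ℕ).succ / ((3! : ℕ) * (3:ℕ) : ℝ) = 2/9 := by norm_num [Nat.factorial]
  nlinarith [h2, pow_nonneg h0 3]


lemma integrable_of_bound {α : Type*} [MeasurableSpace α] {μ : Measure α} [IsFiniteMeasure μ]
    {f : α → ℝ} (hf : AEStronglyMeasurable f μ) (C : ℝ) (h : ∀ᵐ x ∂μ, |f x| ≤ C) :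
    Integrable f μ :=
  Integrable.mono' (integrable_const C) hf (by simpa [Real.norm_eq_abs] using h)

lemma abs_cosh' (t : ℝ) : |Real.cosh t| = Real.cosh t := abs_of_pos (Real.cosh_pos t)

lemma cosh_mono {s t : ℝ} (hs : 0 ≤ s) (hst : s ≤ t) : Real.cosh s ≤ Real.cosh t :=
  Real.cosh_le_cosh.2 (by rw [abs_of_nonneg hs, abs_of_nonneg (hs.trans hst)]; exact hst)


section Hilbert

variable {H : Type*} [NormedAddCommGroup H] [InnerProductSpace ℝ H]
  [CompleteSpace H] [MeasurableSpace H] [BorelSpace H] [SecondCountableTopology H]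

noncomputable def kconst (l : ℝ) (x : H) : ℝ :=
  if ‖x‖ = 0 then 0 else l * Real.sinh (l * ‖x‖) / ‖x‖

lemma pinelis_point (l : ℝ) (hl : 0 ≤ l) (x d : H) :
    Real.cosh (l * ‖x + d‖) ≤ Real.cosh (l * ‖x‖) * Real.cosh (l * ‖d‖)
      + (inner ℝ x d : ℝ) / (‖x‖ * ‖d‖) * (Real.sinh (l * ‖x‖) * Real.sinh (l * ‖d‖)) := by
  rcases eq_or_ne x 0 with rfl | hx
  · simp
  rcases eq_or_ne d 0 with rfl | hd
  · simp
  set a := ‖x‖ with ha'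
  set b := ‖d‖ with hb'
  have ha : 0 < a := norm_pos_iff.2 hx
  have hb : 0 < b := norm_pos_iff.2 hd
  set c : ℝ := inner ℝ x d with hc
  set θ : ℝ := c / (a * b) with hθdef
  have hθ1 : |θ| ≤ 1 := by
    rw [abs_div, abs_of_pos (by positivity : (0:ℝ) < a*b), div_le_one (by positivity)]
    calc |c| ≤ a * b := abs_real_inner_le_norm x d
    _ = a * b := rfl
  set p : ℝ := (1 + θ)/2 with hpdef
  set q : ℝ := (1 - θ)/2 with hqdef
  have hp : 0 ≤ p := by rw [hpdef]; cases abs_le.1 hθ1; linarith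
  have hq : 0 ≤ q := by rw [hqdef]; cases abs_le.1 hθ1; linarith
  have hpq : q + p = 1 := by rw [hpdef, hqdef]; ring
  have hcab : c = θ * (a * b) := by
    rw [hθdef]; field_simp
  have hnorm : ‖x + d‖^2 = a^2 + 2*c + b^2 := by
    rw [ha', hb', hc]; exact norm_add_sq_real x d
  have harg : (l * ‖x + d‖)^2 = q • (l*(a-b))^2 + p • (l*(a+b))^2 := by
    simp only [smul_eq_mul]
    have : (l * ‖x+d‖)^2 = l^2 * ‖x+d‖^2 := by ring
    rw [this, hnorm, hcab, hpdef, hqdef]; ring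
  have key := coshsqrt_convexOn.2 (Set.mem_Ici.2 (sq_nonneg (l*(a-b))))
    (Set.mem_Ici.2 (sq_nonneg (l*(a+b)))) hq hp hpq
  rw [← harg] at key
  have e0 : Real.sqrt ((l * ‖x+d‖)^2) = l * ‖x+d‖ :=
    Real.sqrt_sq (by positivity)
  have e1 : Real.cosh (Real.sqrt ((l*(a-b))^2)) = Real.cosh (l*a - l*b) := by
    rw [Real.sqrt_sq_eq_abs, Real.cosh_abs, mul_sub]
  have e2 : Real.cosh (Real.sqrt ((l*(a+b))^2)) = Real.cosh (l*a + l*b) := by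
    rw [Real.sqrt_sq_eq_abs, Real.cosh_abs, mul_add]
  simp only [smul_eq_mul] at key
  rw [e0, e1, e2, Real.cosh_sub, Real.cosh_add] at key
  calc Real.cosh (l * ‖x + d‖)
      ≤ q * (Real.cosh (l*a) * Real.cosh (l*b) - Real.sinh (l*a) * Real.sinh (l*b))
        + p * (Real.cosh (l*a) * Real.cosh (l*b) + Real.sinh (l*a) * Real.sinh (l*b)) := key
    _ = Real.cosh (l*a) * Real.cosh (l*b) + θ * (Real.sinh (l*a) * Real.sinh (l*b)) := by
        rw [hpdef, hqdef]; ring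
    _ = Real.cosh (l*a) * Real.cosh (l*b) + c/(a*b) * (Real.sinh (l*a) * Real.sinh (l*b)) := rfl


lemma pinelis_point2 (l : ℝ) (hl : 0 ≤ l) (x d : H) :
    Real.cosh (l * ‖x + d‖) ≤ Real.cosh (l * ‖x‖) * Real.cosh (l * ‖d‖)
      + kconst l x * (inner ℝ x d : ℝ)
      + Real.cosh (l * ‖x‖) * (Real.sinh (l * ‖d‖) - l * ‖d‖) := by
  have h2 : (inner ℝ x d : ℝ)/(‖x‖*‖d‖) * (Real.sinh (l*‖x‖) * Real.sinh (l*‖d‖))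
      ≤ kconst l x * (inner ℝ x d : ℝ)
        + Real.cosh (l*‖x‖) * (Real.sinh (l*‖d‖) - l*‖d‖) := by
    rcases eq_or_ne x 0 with rfl | hx
    · simp only [inner_zero_left, zero_div, zero_mul, mul_zero, kconst, norm_zero]
      simp only [if_pos rfl, zero_mul, zero_add]
      exact mul_nonneg (Real.cosh_pos _).le
        (sub_nonneg.2 (Real.self_le_sinh_iff.2 (by positivity)))
    rcases eq_or_ne d 0 with rfl | hd
    · simp
    have ha : 0 < ‖x‖ := norm_pos_iff.2 hx
    have hb : 0 < ‖d‖ := norm_pos_iff.2 hd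
    have habpos : (0:ℝ) < ‖x‖*‖d‖ := by positivity
    rw [kconst, if_neg (ne_of_gt ha)]
    have hC := abs_le.1 (abs_real_inner_le_norm x d)
    have h3 : 0 ≤ Real.sinh (l*‖x‖) := Real.sinh_nonneg_iff.2 (by positivity)
    have h4 : l*‖d‖ ≤ Real.sinh (l*‖d‖) := Real.self_le_sinh_iff.2 (by positivity)
    have h5 : Real.sinh (l*‖x‖) ≤ Real.cosh (l*‖x‖) := by
      nlinarith [Real.cosh_sub_sinh (l*‖x‖), Real.exp_pos (-(l*‖x‖))]
    rw [div_mul_eq_mul_div, div_le_iff₀ habpos, add_mul]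
    have hexp : l * Real.sinh (l*‖x‖) / ‖x‖ * (inner ℝ x d : ℝ) * (‖x‖*‖d‖)
        = l * Real.sinh (l*‖x‖) * (inner ℝ x d : ℝ) * ‖d‖ := by
      field_simp
    rw [hexp]
    nlinarith [mul_le_mul_of_nonneg_right hC.2
        (mul_nonneg h3 (sub_nonneg.2 h4)),
      mul_le_mul_of_nonneg_right h5
        (mul_nonneg habpos.le (sub_nonneg.2 h4))]
  calc Real.cosh (l * ‖x + d‖)
      ≤ Real.cosh (l * ‖x‖) * Real.cosh (l * ‖d‖)
        + (inner ℝ x d : ℝ)/(‖x‖*‖d‖) * (Real.sinh (l*‖x‖) * Real.sinh (l*‖d‖)) :=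
        pinelis_point l hl x d
    _ ≤ _ := by linarith


lemma step_main (ν : Measure H) [IsProbabilityMeasure ν] (l b : ℝ) (hl : 0 ≤ l)
    (hbd : ∀ᵐ y ∂ν, ‖y‖ ≤ b) (hmean : ∫ y, y ∂ν = 0) (x : H) :
    ∫ y, Real.cosh (l * ‖x + y‖) ∂ν
      ≤ Real.cosh (l * ‖x‖) * ∫ y, (Real.exp (l * ‖y‖) - l * ‖y‖) ∂ν := by
  have hint_id : Integrable (fun y : H => y) ν :=
    Integrable.mono' (integrable_const b) aestronglyMeasurable_id
      (by simpa using hbd)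
  have I1 : Integrable (fun y => Real.cosh (l * ‖x + y‖)) ν := by
    refine integrable_of_bound ?_ (Real.cosh (l * (‖x‖ + b))) ?_
    · exact (Real.continuous_cosh.comp
        (continuous_const.mul ((continuous_const.add continuous_id).norm))).aestronglyMeasurable
    · filter_upwards [hbd] with y hy
      rw [abs_cosh']
      refine cosh_mono (by positivity) ?_
      refine mul_le_mul_of_nonneg_left ?_ hl
      calc ‖x + y‖ ≤ ‖x‖ + ‖y‖ := norm_add_le x y
        _ ≤ ‖x‖ + b := by linarith
  have I2a : Integrable (fun y : H => Real.cosh (l * ‖y‖)) ν := by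
    refine integrable_of_bound ?_ (Real.cosh (l * b)) ?_
    · exact (Real.continuous_cosh.comp (continuous_const.mul continuous_norm)).aestronglyMeasurable
    · filter_upwards [hbd] with y hy
      rw [abs_cosh']
      exact cosh_mono (by positivity) (mul_le_mul_of_nonneg_left hy hl)
  have I2b : Integrable (fun y : H => (inner ℝ x y : ℝ)) ν := hint_id.const_inner x
  have I2c : Integrable (fun y : H => Real.sinh (l * ‖y‖) - l * ‖y‖) ν := by
    refine integrable_of_bound ?_ (Real.sinh (l * b)) ?_
    · exact ((Real.continuous_sinh.comp (continuous_const.mul continuous_norm)).sub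
        (continuous_const.mul continuous_norm)).aestronglyMeasurable
    · filter_upwards [hbd] with y hy
      have h1 : l * ‖y‖ ≤ Real.sinh (l * ‖y‖) := Real.self_le_sinh_iff.2 (by positivity)
      have h2 : Real.sinh (l * ‖y‖) ≤ Real.sinh (l * b) :=
        Real.sinh_le_sinh.2 (mul_le_mul_of_nonneg_left hy hl)
      rw [abs_of_nonneg (by linarith)]
      have : 0 ≤ l * ‖y‖ := by positivity
      linarith
  have I3 : Integrable (fun y : H => Real.exp (l * ‖y‖) - l * ‖y‖) ν := by
    have : (fun y : H => Real.exp (l * ‖y‖) - l * ‖y‖)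
        = fun y : H => Real.cosh (l * ‖y‖) + (Real.sinh (l * ‖y‖) - l * ‖y‖) := by
      funext y; rw [← Real.cosh_add_sinh]; ring
    rw [this]; exact I2a.add I2c
  calc ∫ y, Real.cosh (l * ‖x + y‖) ∂ν
      ≤ ∫ y, (Real.cosh (l * ‖x‖) * Real.cosh (l * ‖y‖) + kconst l x * (inner ℝ x y : ℝ)
          + Real.cosh (l * ‖x‖) * (Real.sinh (l * ‖y‖) - l * ‖y‖)) ∂ν := by
        refine integral_mono_ae I1 (((I2a.const_mul _).add (I2b.const_mul _)).add
          (I2c.const_mul _)) ?_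
        exact Filter.Eventually.of_forall (fun y => pinelis_point2 l hl x y)
    _ = Real.cosh (l * ‖x‖) * ∫ y, Real.cosh (l * ‖y‖) ∂ν
        + kconst l x * ∫ y, (inner ℝ x y : ℝ) ∂ν
        + Real.cosh (l * ‖x‖) * ∫ y, (Real.sinh (l * ‖y‖) - l * ‖y‖) ∂ν := by
        have J1 : Integrable (fun y : H => Real.cosh (l * ‖x‖) * Real.cosh (l * ‖y‖)
            + kconst l x * (inner ℝ x y : ℝ)) ν := (I2a.const_mul _).add (I2b.const_mul _)
        have J2 : Integrable (fun y : H => Real.cosh (l * ‖x‖)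
            * (Real.sinh (l * ‖y‖) - l * ‖y‖)) ν := I2c.const_mul _
        have J3 : Integrable (fun y : H => Real.cosh (l * ‖x‖) * Real.cosh (l * ‖y‖)) ν :=
          I2a.const_mul _
        have J4 : Integrable (fun y : H => kconst l x * (inner ℝ x y : ℝ)) ν := I2b.const_mul _
        rw [integral_add J1 J2, integral_add J3 J4,
          integral_const_mul, integral_const_mul, integral_const_mul]
    _ = Real.cosh (l * ‖x‖) * ∫ y, (Real.exp (l * ‖y‖) - l * ‖y‖) ∂ν := by
        have hz : ∫ y, (inner ℝ x y : ℝ) ∂ν = 0 := by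
          rw [integral_inner hint_id x, hmean, inner_zero_right]
        rw [hz, mul_zero, add_zero, ← mul_add, ← integral_add I2a I2c]
        congr 1
        apply integral_congr_ae
        refine Filter.Eventually.of_forall (fun y => ?_)
        show Real.cosh (l * ‖y‖) + (Real.sinh (l * ‖y‖) - l * ‖y‖)
          = Real.exp (l * ‖y‖) - l * ‖y‖
        rw [← Real.cosh_add_sinh]; ring

lemma step_bound (ν : Measure H) [IsProbabilityMeasure ν] (l b v : ℝ) (hl : 0 ≤ l) (hb : 0 < b)
    (hbd : ∀ᵐ y ∂ν, ‖y‖ ≤ b) (hv : ∫ y, ‖y‖^2 ∂ν ≤ v) :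
    ∫ y, (Real.exp (l * ‖y‖) - l * ‖y‖) ∂ν
      ≤ Real.exp ((Real.exp (l*b) - 1 - l*b)/b^2 * v) := by
  set G := (Real.exp (l*b) - 1 - l*b)/b^2 with hG
  have hnum : 0 ≤ Real.exp (l*b) - 1 - l*b := by
    have := Real.add_one_le_exp (l*b); linarith
  have hG0 : 0 ≤ G := by rw [hG]; positivity
  have Isq : Integrable (fun y : H => ‖y‖^2) ν := by
    refine integrable_of_bound (continuous_norm.pow 2).aestronglyMeasurable (b^2) ?_
    filter_upwards [hbd] with y hy
    rw [abs_of_nonneg (by positivity)]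
    exact pow_le_pow_left₀ (norm_nonneg y) hy 2
  have I2a : Integrable (fun y : H => Real.cosh (l * ‖y‖)) ν := by
    refine integrable_of_bound
      ((Real.continuous_cosh.comp (continuous_const.mul continuous_norm)).aestronglyMeasurable)
      (Real.cosh (l * b)) ?_
    filter_upwards [hbd] with y hy
    rw [abs_cosh']
    exact cosh_mono (by positivity) (mul_le_mul_of_nonneg_left hy hl)
  have I2c : Integrable (fun y : H => Real.sinh (l * ‖y‖) - l * ‖y‖) ν := by
    refine integrable_of_bound ?_ (Real.sinh (l * b)) ?_
    · exact ((Real.continuous_sinh.comp (continuous_const.mul continuous_norm)).sub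
        (continuous_const.mul continuous_norm)).aestronglyMeasurable
    · filter_upwards [hbd] with y hy
      have h1 : l * ‖y‖ ≤ Real.sinh (l * ‖y‖) := Real.self_le_sinh_iff.2 (by positivity)
      have h2 : Real.sinh (l * ‖y‖) ≤ Real.sinh (l * b) :=
        Real.sinh_le_sinh.2 (mul_le_mul_of_nonneg_left hy hl)
      have h3 : 0 ≤ l * ‖y‖ := by positivity
      rw [abs_of_nonneg (by linarith)]
      linarith
  have I3 : Integrable (fun y : H => Real.exp (l * ‖y‖) - l * ‖y‖) ν := by
    have heq : (fun y : H => Real.exp (l * ‖y‖) - l * ‖y‖)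
        = fun y : H => Real.cosh (l * ‖y‖) + (Real.sinh (l * ‖y‖) - l * ‖y‖) := by
      funext y; rw [← Real.cosh_add_sinh]; ring
    rw [heq]; exact I2a.add I2c
  have key : ∫ y, (Real.exp (l * ‖y‖) - l * ‖y‖) ∂ν ≤ 1 + G * ∫ y, ‖y‖^2 ∂ν := by
    have h1 : ∫ y, (Real.exp (l * ‖y‖) - l * ‖y‖) ∂ν ≤ ∫ y, (1 + G * ‖y‖^2) ∂ν := by
      refine integral_mono_ae I3 ((integrable_const 1).add (Isq.const_mul G)) ?_
      filter_upwards [hbd] with y hy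
      have h2 := exp_ratio_mono hl (norm_nonneg y) hy
      have h3 : ‖y‖^2/b^2 * (Real.exp (l*b) - 1 - l*b) = G * ‖y‖^2 := by rw [hG]; ring
      linarith
    have h4 : ∫ y, (1 + G * ‖y‖^2) ∂ν = 1 + G * ∫ y, ‖y‖^2 ∂ν := by
      rw [integral_add (integrable_const 1) (Isq.const_mul G), integral_const,
        integral_const_mul]
      simp
    linarith [h1, h4.le, h4.ge]
  have h5 : G * ∫ y, ‖y‖^2 ∂ν ≤ G * v := mul_le_mul_of_nonneg_left hv hG0
  have h6 := Real.add_one_le_exp (G * v)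
  linarith


lemma key_ind {Ω : Type*} [MeasurableSpace Ω] (μ : Measure Ω) [IsProbabilityMeasure μ]
    {n : ℕ} (X : Fin n → Ω → H) (hXm : ∀ i, Measurable (X i))
    (hXi : iIndepFun X μ)
    (l b v : ℝ) (hl : 0 ≤ l) (hb : 0 < b)
    (hXb : ∀ i, ∀ᵐ ω ∂μ, ‖X i ω‖ ≤ b)
    (hX0 : ∀ i, ∫ ω, X i ω ∂μ = 0)
    (hXv : ∀ i, ∫ ω, ‖X i ω‖^2 ∂μ ≤ v)
    (s : Finset (Fin n)) :
    ∫ ω, Real.cosh (l * ‖∑ i ∈ s, X i ω‖) ∂μ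
      ≤ Real.exp ((Real.exp (l*b) - 1 - l*b)/b^2 * v * s.card) := by
  classical
  set G := (Real.exp (l*b) - 1 - l*b)/b^2 with hGdef
  induction s using Finset.induction_on with
  | empty => simp
  | @insert i s hi ih =>
    set U : Ω → H := fun ω => ∑ j ∈ s, X j ω with hUdef
    have hUm : Measurable U := Finset.measurable_sum s (fun j _ => hXm j)
    have hUeq : (∑ j ∈ s, X j) = U := by
      funext ω; simp [hUdef, Finset.sum_apply]
    have hUV : IndepFun U (X i) μ := by
      have := hXi.indepFun_finset_sum_of_notMem hXm hi
      rwa [hUeq] at this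
    haveI : IsProbabilityMeasure (μ.map U) := Measure.isProbabilityMeasure_map hUm.aemeasurable
    haveI : IsProbabilityMeasure (μ.map (X i)) :=
      Measure.isProbabilityMeasure_map (hXm i).aemeasurable
    have hpair : μ.map (fun ω => (U ω, X i ω)) = (μ.map U).prod (μ.map (X i)) :=
      (indepFun_iff_map_prod_eq_prod_map_map hUm.aemeasurable (hXm i).aemeasurable).1 hUV
    have hallb : ∀ᵐ ω ∂μ, ∀ j, ‖X j ω‖ ≤ b := ae_all_iff.2 hXb
    have hboundU : ∀ᵐ ω ∂μ, ‖U ω‖ ≤ b * s.card := by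
      filter_upwards [hallb] with ω hω
      calc ‖∑ j ∈ s, X j ω‖ ≤ ∑ j ∈ s, ‖X j ω‖ := norm_sum_le _ _
        _ ≤ ∑ _j ∈ s, b := Finset.sum_le_sum (fun j _ => hω j)
        _ = b * s.card := by rw [Finset.sum_const, nsmul_eq_mul]; ring
    have hsetm : ∀ c : ℝ, MeasurableSet {u : H | ‖u‖ ≤ c} :=
      fun c => (isClosed_le continuous_norm continuous_const).measurableSet
    have hmapU : ∀ᵐ u ∂(μ.map U), ‖u‖ ≤ b * s.card :=
      (ae_map_iff hUm.aemeasurable (hsetm _)).2 hboundU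
    have hmapV : ∀ᵐ y ∂(μ.map (X i)), ‖y‖ ≤ b :=
      (ae_map_iff (hXm i).aemeasurable (hsetm _)).2 (hXb i)
    have hmeanV : ∫ y, y ∂(μ.map (X i)) = 0 := by
      rw [show (∫ y, y ∂(μ.map (X i))) = ∫ ω, X i ω ∂μ from
        integral_map (hXm i).aemeasurable aestronglyMeasurable_id]
      exact hX0 i
    have hvV : ∫ y, ‖y‖^2 ∂(μ.map (X i)) ≤ v := by
      rw [integral_map (hXm i).aemeasurable (f := fun y : H => ‖y‖^2) (continuous_norm.pow 2).aestronglyMeasurable]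
      exact hXv i
    have hcont : Continuous (fun z : H × H => Real.cosh (l * ‖z.1 + z.2‖)) := by fun_prop
    have hInt : Integrable (fun z : H × H => Real.cosh (l * ‖z.1 + z.2‖))
        ((μ.map U).prod (μ.map (X i))) := by
      refine integrable_of_bound hcont.aestronglyMeasurable
        (Real.cosh (l * (b * s.card + b))) ?_
      have hae : ∀ᵐ z ∂((μ.map U).prod (μ.map (X i))), ‖z.1‖ ≤ b * s.card ∧ ‖z.2‖ ≤ b := by
        rw [MeasureTheory.Measure.ae_prod_iff_ae_ae]
        · filter_upwards [hmapU] with u hu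
          filter_upwards [hmapV] with y hy
          exact ⟨hu, hy⟩
        · exact ((hsetm _).preimage measurable_fst).inter ((hsetm _).preimage measurable_snd)
      filter_upwards [hae] with z hz
      rw [abs_cosh']
      refine cosh_mono (by positivity) (mul_le_mul_of_nonneg_left ?_ hl)
      calc ‖z.1 + z.2‖ ≤ ‖z.1‖ + ‖z.2‖ := norm_add_le _ _
        _ ≤ b * s.card + b := add_le_add hz.1 hz.2
    have hcosh_contU : Continuous (fun u : H => Real.cosh (l * ‖u‖)) := by fun_prop
    have hIU : Integrable (fun u : H => Real.cosh (l * ‖u‖)) (μ.map U) := by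
      refine integrable_of_bound hcosh_contU.aestronglyMeasurable
        (Real.cosh (l * (b * s.card))) ?_
      filter_upwards [hmapU] with u hu
      rw [abs_cosh']
      exact cosh_mono (by positivity) (mul_le_mul_of_nonneg_left hu hl)
    calc ∫ ω, Real.cosh (l * ‖∑ j ∈ insert i s, X j ω‖) ∂μ
        = ∫ ω, Real.cosh (l * ‖U ω + X i ω‖) ∂μ := by
          refine integral_congr_ae (Filter.Eventually.of_forall fun ω => ?_)
          show Real.cosh (l * ‖∑ j ∈ insert i s, X j ω‖) = Real.cosh (l * ‖U ω + X i ω‖)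
          rw [Finset.sum_insert hi, add_comm]
      _ = ∫ z, Real.cosh (l * ‖z.1 + z.2‖) ∂((μ.map U).prod (μ.map (X i))) := by
          rw [← hpair, integral_map (hUm.prodMk (hXm i)).aemeasurable
            hcont.aestronglyMeasurable]
      _ = ∫ u, ∫ y, Real.cosh (l * ‖u + y‖) ∂(μ.map (X i)) ∂(μ.map U) :=
          integral_prod _ hInt
      _ ≤ ∫ u, Real.cosh (l * ‖u‖) * Real.exp (G * v) ∂(μ.map U) := by
          refine integral_mono_of_nonneg
            (Filter.Eventually.of_forall fun u => integral_nonneg fun y => (Real.cosh_pos _).le)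
            (hIU.mul_const _) (Filter.Eventually.of_forall fun u => ?_)
          calc ∫ y, Real.cosh (l * ‖u + y‖) ∂(μ.map (X i))
              ≤ Real.cosh (l * ‖u‖) * ∫ y, (Real.exp (l * ‖y‖) - l * ‖y‖) ∂(μ.map (X i)) :=
                step_main _ l b hl hmapV hmeanV u
            _ ≤ Real.cosh (l * ‖u‖) * Real.exp (G * v) := by
                refine mul_le_mul_of_nonneg_left ?_ (Real.cosh_pos _).le
                rw [hGdef]
                exact step_bound _ l b v hl hb hmapV hvV
      _ = Real.exp (G * v) * ∫ u, Real.cosh (l * ‖u‖) ∂(μ.map U) := by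
          rw [integral_mul_const]; ring
      _ = Real.exp (G * v) * ∫ ω, Real.cosh (l * ‖U ω‖) ∂μ := by
          rw [integral_map hUm.aemeasurable hcosh_contU.aestronglyMeasurable]
      _ ≤ Real.exp (G * v) * Real.exp (G * v * s.card) :=
          mul_le_mul_of_nonneg_left ih (Real.exp_pos _).le
      _ = Real.exp (G * v * (insert i s).card) := by
          rw [← Real.exp_add, Finset.card_insert_of_notMem hi]
          push_cast
          ring


end Hilbert

lemma numeric_choice (M σ2 L : ℝ) (n : ℕ) (hn : 0 < n) (hM : 0 < M) (hσ2 : 0 ≤ σ2)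
    (hL : 0 < L) (s0 : ℝ) (hs0 : 0 ≤ s0) (hs0sq : s0^2 = 2*σ2*L/n) :
    ∃ l : ℝ, 0 < l ∧
      (Real.exp (l*(2*M)) - 1 - l*(2*M))/(2*M)^2 * σ2 * n
        ≤ l * ((n:ℝ) * (2*M*L/n + s0)) - L := by
  have hn0 : (0:ℝ) < n := by exact_mod_cast hn
  set w : ℝ := n * s0 with hwdef
  have hw0 : 0 ≤ w := by positivity
  have hσ2w : σ2 = w^2/(2*L*n) := by
    have : s0^2 = 2*σ2*L/n := hs0sq
    rw [hwdef]
    field_simp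
    field_simp at this
    nlinarith [this]
  by_cases hcase : 4*L*M ≤ w
  · -- case A
    have hwpos : 0 < w := lt_of_lt_of_le (by positivity) hcase
    refine ⟨2*L/w, by positivity, ?_⟩
    have hu0 : 0 ≤ (2*L/w)*(2*M) := by positivity
    have hu1 : (2*L/w)*(2*M) ≤ 1 := by
      rw [div_mul_eq_mul_div, div_le_one hwpos]
      linarith
    have hexp := exp_cubic_bound hu0 hu1
    have step1 : (Real.exp ((2*L/w)*(2*M)) - 1 - (2*L/w)*(2*M))/(2*M)^2 * σ2 * n
        ≤ (((2*L/w)*(2*M))^2/2 + (2/9)*((2*L/w)*(2*M))^3)/(2*M)^2 * σ2 * n := by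
      gcongr
      · linarith
    refine step1.trans ?_
    have heqL : (((2*L/w)*(2*M))^2/2 + (2/9)*((2*L/w)*(2*M))^3)/(2*M)^2 * σ2 * n
        = L + (16/9)*(L^2*M/w) := by
      rw [hσ2w]
      field_simp
      ring
    have heqR : (2*L/w) * ((n:ℝ) * (2*M*L/n + s0)) - L = 4*(L^2*M/w) + L := by
      have h1 : (n:ℝ) * (2*M*L/n + s0) = 2*M*L + w := by
        rw [hwdef]; field_simp
      rw [h1]
      field_simp
      ring
    rw [heqL, heqR]
    have : 0 < L^2*M/w := by positivity
    linarith
  · -- case B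
    push_neg at hcase
    refine ⟨1/(2*M), by positivity, ?_⟩
    have h1 : (1/(2*M))*(2*M) = 1 := by field_simp
    rw [h1]
    have heqR : (1/(2*M)) * ((n:ℝ) * (2*M*L/n + s0)) - L = w/(2*M) := by
      have h2 : (n:ℝ) * (2*M*L/n + s0) = 2*M*L + w := by
        rw [hwdef]; field_simp
      rw [h2]
      field_simp
      ring
    rw [heqR, hσ2w]
    have hexp1 : Real.exp 1 < 2.7182818286 := Real.exp_one_lt_d9
    have hid : (Real.exp 1 - 1 - 1)/(2*M)^2 * (w^2/(2*L*(n:ℝ))) * (n:ℝ)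
        = ((Real.exp 1 - 1 - 1) * w) * (w/(8*L*M^2)) := by
      field_simp
      ring
    rw [hid]
    have he2 : Real.exp 1 - 1 - 1 ≤ 1 := by linarith [hexp1]
    have hkey : (Real.exp 1 - 1 - 1) * w ≤ 4*L*M := by
      nlinarith [mul_le_mul_of_nonneg_right he2 hw0, hcase]
    have h3 : 0 ≤ w/(8*L*M^2) := by positivity
    calc ((Real.exp 1 - 1 - 1) * w) * (w/(8*L*M^2))
        ≤ (4*L*M) * (w/(8*L*M^2)) := mul_le_mul_of_nonneg_right hkey h3
      _ = w/(2*M) := by field_simp; ring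


theorem stmt_9 {H : Type*} [NormedAddCommGroup H] [InnerProductSpace ℝ H]
    [CompleteSpace H] [MeasurableSpace H] [BorelSpace H]
    [SecondCountableTopology H]
    {Ω : Type*} [MeasurableSpace Ω] (μ : Measure Ω) [IsProbabilityMeasure μ]
    (n : ℕ) (hn : 0 < n) (ξ : Fin n → Ω → H)
    (hmeas : ∀ i, Measurable (ξ i))
    (hindep : iIndepFun ξ μ)
    (hident : ∀ i, μ.map (ξ i) = μ.map (ξ ⟨0, hn⟩))
    (M : ℝ) (hM : ∀ i, ∀ᵐ ω ∂μ, ‖ξ i ω‖ ≤ M)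
    (σ2 : ℝ) (hσ2 : σ2 = ∫ ω, ‖ξ ⟨0, hn⟩ ω‖ ^ 2 ∂μ)
    (δ : ℝ) (hδ : δ ∈ Set.Ioo (0:ℝ) 1) :
    ENNReal.ofReal (1 - δ) ≤
      μ {ω | ‖(1 / (n : ℝ)) • ∑ i, (ξ i ω - ∫ ω', ξ i ω' ∂μ)‖ ≤
        2 * M * Real.log (2 / δ) / n +
          Real.sqrt (2 * σ2 * Real.log (2 / δ) / n)} := by
  obtain ⟨hδ0, hδ1⟩ := hδ
  have hn0 : (0:ℝ) < n := by exact_mod_cast hn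
  set L := Real.log (2/δ) with hLdef
  have hL : 0 < L := Real.log_pos (by rw [lt_div_iff₀ hδ0]; linarith)
  have hσ2nn : 0 ≤ σ2 := by
    rw [hσ2]; exact integral_nonneg (fun ω => by positivity)
  set s0 := Real.sqrt (2*σ2*L/(n:ℝ)) with hs0def
  have hs0nn : 0 ≤ s0 := Real.sqrt_nonneg _
  have hs0sq : s0^2 = 2*σ2*L/(n:ℝ) := Real.sq_sqrt (by positivity)
  set t := 2*M*L/(n:ℝ) + s0 with htdef
  set S : Ω → H := fun ω => ∑ i, (ξ i ω - ∫ ω', ξ i ω' ∂μ) with hSdef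
  show ENNReal.ofReal (1-δ) ≤ μ {ω | ‖(1/(n:ℝ)) • S ω‖ ≤ t}
  -- reduce to a bound on the complement
  suffices hbad : μ {ω | ‖(1/(n:ℝ)) • S ω‖ ≤ t}ᶜ ≤ ENNReal.ofReal δ by
    have h1 : (1:ENNReal) ≤ μ {ω | ‖(1/(n:ℝ)) • S ω‖ ≤ t} + ENNReal.ofReal δ := by
      calc (1:ENNReal) = μ Set.univ := measure_univ.symm
        _ = μ ({ω | ‖(1/(n:ℝ)) • S ω‖ ≤ t} ∪ {ω | ‖(1/(n:ℝ)) • S ω‖ ≤ t}ᶜ) := by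
            rw [Set.union_compl_self]
        _ ≤ μ {ω | ‖(1/(n:ℝ)) • S ω‖ ≤ t} + μ {ω | ‖(1/(n:ℝ)) • S ω‖ ≤ t}ᶜ :=
            measure_union_le _ _
        _ ≤ _ := add_le_add_right hbad _
    have h2 : ENNReal.ofReal (1-δ) = 1 - ENNReal.ofReal δ := by
      rw [ENNReal.ofReal_sub _ hδ0.le, ENNReal.ofReal_one]
    rw [h2]
    exact tsub_le_iff_right.2 h1
  -- sign of M
  have hMnn : 0 ≤ M := by
    by_contra hneg
    push_neg at hneg
    have hfls : ∀ᵐ ω ∂μ, False := by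
      filter_upwards [hM ⟨0, hn⟩] with ω hω
      exact absurd (le_trans (norm_nonneg _) hω) (by linarith)
    have h2 := ae_iff.1 hfls
    simp at h2
  rcases eq_or_lt_of_le hMnn with hM0 | hMpos
  · -- degenerate case M = 0
    have hz : ∀ᵐ ω ∂μ, ∀ i, ξ i ω = 0 := by
      rw [ae_all_iff]
      intro i
      filter_upwards [hM i] with ω h
      rw [← hM0] at h
      exact norm_le_zero_iff.1 h
    have hsub : {ω | ‖(1/(n:ℝ)) • S ω‖ ≤ t}ᶜ ⊆ {ω | ¬ ∀ i, ξ i ω = 0} := by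
      intro ω hω
      simp only [Set.mem_compl_iff, Set.mem_setOf_eq] at hω ⊢
      intro hall
      apply hω
      have hint0 : ∀ i, ∫ ω', ξ i ω' ∂μ = 0 := by
        intro i
        apply integral_eq_zero_of_ae
        filter_upwards [hz] with ω' h'
        exact h' i
      have hS0 : S ω = 0 := by
        rw [hSdef]
        simp only
        rw [Finset.sum_eq_zero]
        intro i _
        rw [hall i, hint0 i, sub_zero]
      rw [hS0, smul_zero, norm_zero]
      have : 0 ≤ 2*M*L/(n:ℝ) := by rw [← hM0]; simp
      rw [htdef]
      linarith
    calc μ {ω | ‖(1/(n:ℝ)) • S ω‖ ≤ t}ᶜ ≤ μ {ω | ¬ ∀ i, ξ i ω = 0} := measure_mono hsub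
      _ = 0 := ae_iff.1 hz
      _ ≤ ENNReal.ofReal δ := by positivity
  -- main case M > 0
  set X : Fin n → Ω → H := fun i ω => ξ i ω - ∫ ω', ξ i ω' ∂μ with hXdef
  have hXm : ∀ i, Measurable (X i) := fun i => (hmeas i).sub measurable_const
  have hXindep : iIndepFun X μ := by
    exact hindep.comp (fun i => fun y : H => y - ∫ ω', ξ i ω' ∂μ)
      (fun i => measurable_id.sub measurable_const)
  have hIξ : ∀ i, Integrable (ξ i) μ := fun i =>
    Integrable.mono' (integrable_const M) (hmeas i).aestronglyMeasurable (hM i)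
  have hcM : ∀ i, ‖∫ ω', ξ i ω' ∂μ‖ ≤ M := by
    intro i
    calc ‖∫ ω', ξ i ω' ∂μ‖ ≤ ∫ ω', ‖ξ i ω'‖ ∂μ := norm_integral_le_integral_norm _
      _ ≤ ∫ _ω', M ∂μ := integral_mono_ae (hIξ i).norm (integrable_const M) (hM i)
      _ = M := by simp
  have hXb : ∀ i, ∀ᵐ ω ∂μ, ‖X i ω‖ ≤ 2*M := by
    intro i
    filter_upwards [hM i] with ω h
    calc ‖X i ω‖ ≤ ‖ξ i ω‖ + ‖∫ ω', ξ i ω' ∂μ‖ := norm_sub_le _ _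
      _ ≤ M + M := add_le_add h (hcM i)
      _ = 2*M := by ring
  have hX0 : ∀ i, ∫ ω, X i ω ∂μ = 0 := by
    intro i
    show ∫ ω, (ξ i ω - ∫ ω', ξ i ω' ∂μ) ∂μ = 0
    rw [integral_sub (hIξ i) (integrable_const _), integral_const]
    simp
  have hvar : ∀ i, ∫ ω, ‖ξ i ω‖^2 ∂μ = σ2 := by
    intro i
    rw [hσ2,
      ← integral_map (hmeas i).aemeasurable (f := fun y : H => ‖y‖^2)
        (Continuous.aestronglyMeasurable (continuous_norm.pow 2)),
      hident i,
      integral_map (hmeas ⟨0,hn⟩).aemeasurable (f := fun y : H => ‖y‖^2)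
        (Continuous.aestronglyMeasurable (continuous_norm.pow 2))]
  have hIsq : ∀ i, Integrable (fun ω => ‖ξ i ω‖^2) μ := by
    intro i
    refine integrable_of_bound ((hmeas i).norm.pow_const 2).aestronglyMeasurable (M^2) ?_
    filter_upwards [hM i] with ω h
    rw [abs_of_nonneg (by positivity)]
    exact pow_le_pow_left₀ (norm_nonneg _) h 2
  have hXv : ∀ i, ∫ ω, ‖X i ω‖^2 ∂μ ≤ σ2 := by
    intro i
    set c := ∫ ω', ξ i ω' ∂μ with hcdef
    have hIin : Integrable (fun ω => (inner ℝ (ξ i ω) c : ℝ)) μ := (hIξ i).inner_const c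
    have hinner : ∫ ω, (inner ℝ (ξ i ω) c : ℝ) ∂μ = ‖c‖^2 := by
      have h1 : ∀ ω, (inner ℝ (ξ i ω) c : ℝ) = (inner ℝ c (ξ i ω) : ℝ) := fun ω =>
        real_inner_comm _ _
      rw [integral_congr_ae (Filter.Eventually.of_forall fun ω => h1 ω),
        integral_inner (hIξ i) c, real_inner_self_eq_norm_sq]
    have heq : ∫ ω, ‖X i ω‖^2 ∂μ = σ2 - 2*‖c‖^2 + ‖c‖^2 := by
      calc ∫ ω, ‖X i ω‖^2 ∂μ
          = ∫ ω, (‖ξ i ω‖^2 - 2*(inner ℝ (ξ i ω) c : ℝ) + ‖c‖^2) ∂μ := by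
            refine integral_congr_ae (Filter.Eventually.of_forall fun ω => ?_)
            show ‖ξ i ω - c‖^2 = ‖ξ i ω‖^2 - 2*(inner ℝ (ξ i ω) c : ℝ) + ‖c‖^2
            exact norm_sub_sq_real _ _
        _ = (∫ ω, (‖ξ i ω‖^2 - 2*(inner ℝ (ξ i ω) c : ℝ)) ∂μ) + ‖c‖^2 := by
            have J : Integrable (fun ω => ‖ξ i ω‖^2 - 2*(inner ℝ (ξ i ω) c : ℝ)) μ :=
              (hIsq i).sub (hIin.const_mul 2)
            rw [integral_add J (integrable_const _), integral_const]
            simp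
        _ = σ2 - 2*‖c‖^2 + ‖c‖^2 := by
            rw [integral_sub (hIsq i) (hIin.const_mul 2), integral_const_mul, hinner, hvar i]
    rw [heq]
    nlinarith [sq_nonneg ‖c‖]
  obtain ⟨l, hl, hnum⟩ := numeric_choice M σ2 L n hn hMpos hσ2nn hL s0 hs0nn hs0sq
  set G := (Real.exp (l*(2*M)) - 1 - l*(2*M))/(2*M)^2 with hGdef
  -- the key moment bound
  have hkey : ∫ ω, Real.cosh (l * ‖S ω‖) ∂μ ≤ Real.exp (G*σ2*n) := by
    have h := key_ind μ X hXm hXindep l (2*M) σ2 hl.le (by positivity) hXb hX0 hXv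
      Finset.univ
    have hc : ((Finset.univ : Finset (Fin n)).card : ℝ) = n := by simp
    rw [hc] at h
    exact h
  -- Markov
  have hSm : Measurable S := by
    apply Finset.measurable_sum
    intro i _
    exact (hmeas i).sub measurable_const
  have hfm : Measurable (fun ω => Real.cosh (l * ‖S ω‖)) :=
    Real.continuous_cosh.measurable.comp (hSm.norm.const_mul l)
  have hSb : ∀ᵐ ω ∂μ, ‖S ω‖ ≤ 2*M*n := by
    filter_upwards [ae_all_iff.2 hXb] with ω h
    calc ‖S ω‖ ≤ ∑ i, ‖X i ω‖ := norm_sum_le _ _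
      _ ≤ ∑ _i : Fin n, 2*M := Finset.sum_le_sum (fun i _ => h i)
      _ = 2*M*n := by simp [Finset.sum_const, nsmul_eq_mul]; ring
  have hfint : Integrable (fun ω => Real.cosh (l * ‖S ω‖)) μ := by
    refine integrable_of_bound hfm.aestronglyMeasurable (Real.cosh (l*(2*M*n))) ?_
    filter_upwards [hSb] with ω h
    rw [abs_cosh']
    exact cosh_mono (by positivity) (mul_le_mul_of_nonneg_left h hl.le)
  have ht0 : 0 ≤ t := by
    rw [htdef]
    have h1 : 0 ≤ 2*M*L/(n:ℝ) := by positivity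
    linarith
  have hmarkov := mul_meas_ge_le_integral_of_nonneg
    (Filter.Eventually.of_forall fun ω => (Real.cosh_pos (l * ‖S ω‖)).le) hfint
    (Real.cosh (l*((n:ℝ)*t)))
  have hsub2 : {ω | ‖(1/(n:ℝ)) • S ω‖ ≤ t}ᶜ
      ⊆ {ω | Real.cosh (l*((n:ℝ)*t)) ≤ Real.cosh (l * ‖S ω‖)} := by
    intro ω hω
    simp only [Set.mem_compl_iff, Set.mem_setOf_eq, not_le] at hω ⊢
    have hnorm : ‖(1/(n:ℝ)) • S ω‖ = ‖S ω‖/(n:ℝ) := by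
      rw [norm_smul, Real.norm_eq_abs, abs_of_pos (by positivity : (0:ℝ) < 1/(n:ℝ))]
      ring
    rw [hnorm] at hω
    have hSlow : (n:ℝ)*t ≤ ‖S ω‖ := by
      rw [lt_div_iff₀ hn0] at hω
      nlinarith
    exact cosh_mono (by positivity) (mul_le_mul_of_nonneg_left hSlow hl.le)
  have htoReal : (μ {ω | ‖(1/(n:ℝ)) • S ω‖ ≤ t}ᶜ).toReal ≤ δ := by
    have h1 : (μ {ω | ‖(1/(n:ℝ)) • S ω‖ ≤ t}ᶜ).toReal
        ≤ (μ {ω | Real.cosh (l*((n:ℝ)*t)) ≤ Real.cosh (l * ‖S ω‖)}).toReal :=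
      ENNReal.toReal_mono (measure_ne_top _ _) (measure_mono hsub2)
    have h2 : (μ {ω | Real.cosh (l*((n:ℝ)*t)) ≤ Real.cosh (l * ‖S ω‖)}).toReal
        ≤ Real.exp (G*σ2*n) / Real.cosh (l*((n:ℝ)*t)) := by
      rw [le_div_iff₀ (Real.cosh_pos _)]
      calc (μ {ω | Real.cosh (l*((n:ℝ)*t)) ≤ Real.cosh (l * ‖S ω‖)}).toReal
            * Real.cosh (l*((n:ℝ)*t))
          = Real.cosh (l*((n:ℝ)*t))
            * (μ {ω | Real.cosh (l*((n:ℝ)*t)) ≤ Real.cosh (l * ‖S ω‖)}).toReal := by ring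
        _ ≤ ∫ ω, Real.cosh (l * ‖S ω‖) ∂μ := hmarkov
        _ ≤ Real.exp (G*σ2*n) := hkey
    have h3 : Real.exp (G*σ2*n) / Real.cosh (l*((n:ℝ)*t)) ≤ δ := by
      have hcosh_ge : Real.exp (l*((n:ℝ)*t))/2 ≤ Real.cosh (l*((n:ℝ)*t)) := by
        rw [Real.cosh_eq]
        have := (Real.exp_pos (-(l*((n:ℝ)*t)))).le
        linarith
      calc Real.exp (G*σ2*n) / Real.cosh (l*((n:ℝ)*t))
          ≤ Real.exp (G*σ2*n) / (Real.exp (l*((n:ℝ)*t))/2) := by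
            apply div_le_div_of_nonneg_left (Real.exp_pos _).le ?_ hcosh_ge
            positivity
        _ = 2 * Real.exp (G*σ2*n - l*((n:ℝ)*t)) := by
            rw [Real.exp_sub]
            field_simp
        _ ≤ 2 * Real.exp (-L) := by
            have hle : G*σ2*n - l*((n:ℝ)*t) ≤ -L := by
              rw [hGdef, htdef]
              linarith [hnum]
            exact mul_le_mul_of_nonneg_left (Real.exp_le_exp.2 hle) (by norm_num)
        _ = δ := by
            rw [hLdef, Real.exp_neg, Real.exp_log (by positivity)]
            field_simp
    linarith
  exact (ENNReal.le_ofReal_iff_toReal_le (measure_ne_top _ _) hδ0.le).2 htoReal
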